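/- Let U ⊂ ℝ^k be open and h : U → ℝ^m continuously differentiable. For x ∈ U let λ(x) ≥ 0 be the square root of the largest eigenvalue of Dh(x)^T Dh(x). Let a ≥ 0 and let A ⊂ U be Borel with ℋ^a(A) < ∞. Then ℋ^a(h(A)) ≤ ∫_A λ(x)^a dℋ^a(x). -/

import Mathlib

open MeasureTheory

open Set
open scoped NNReal ENNReal


/-- Key Lemma: if the derivative norm is `< L` on a measurable set `s ⊆ U`, then
`μH[a] (h '' s) ≤ L ^ a * μH[a] s`. -/
lemma key_lip {k m : ℕ} {U : Set (EuclideanSpace ℝ (Fin k))} (hU : IsOpen U)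
    {h : EuclideanSpace ℝ (Fin k) → EuclideanSpace ℝ (Fin m)}
    (hh : ContDiffOn ℝ 1 h U) {a : ℝ} (ha : 0 ≤ a)
    {s : Set (EuclideanSpace ℝ (Fin k))} (hsU : s ⊆ U) (hs : MeasurableSet s)
    {L : ℝ≥0} (hL : ∀ x ∈ s, ‖fderiv ℝ h x‖₊ < L) :
    μH[a] (h '' s) ≤ (L : ℝ≥0∞) ^ a * μH[a] s := by
  classical
  have hdiff : ∀ x ∈ U, DifferentiableAt ℝ h x := fun x hx =>
    (hh.differentiableOn one_ne_zero).differentiableAt (hU.mem_nhds hx)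
  have hcont : ContinuousOn (fun x => ‖fderiv ℝ h x‖) U :=
    ((hh.continuousOn_fderiv_of_isOpen hU le_rfl).norm)
  set V : Set (EuclideanSpace ℝ (Fin k)) :=
    U ∩ (fun x => ‖fderiv ℝ h x‖) ⁻¹' Iio (L : ℝ) with hVdef
  have hV : IsOpen V := hcont.isOpen_inter_preimage hU isOpen_Iio
  have hsV : s ⊆ V := fun x hx => ⟨hsU hx, by exact NNReal.coe_lt_coe.2 (hL x hx)⟩
  have hr : ∀ x ∈ s, ∃ r > 0, Metric.ball x r ⊆ V := fun x hx =>
    Metric.isOpen_iff.1 hV x (hsV hx)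
  choose! r hr0 hrV using hr
  obtain ⟨t, hts, htc, hcover⟩ :=
    TopologicalSpace.countable_cover_nhdsWithin
      (f := fun x => Metric.ball x (r x)) (s := s)
      (fun x hx => nhdsWithin_le_nhds (Metric.ball_mem_nhds x (hr0 x hx)))
  rcases t.eq_empty_or_nonempty with rfl | hne
  · have : s = ∅ := by simpa using hcover
    simp [this]
  obtain ⟨e, rfl⟩ := htc.exists_eq_range hne
  have hes : ∀ n, e n ∈ s := fun n => hts ⟨n, rfl⟩
  -- Lipschitz on each ball
  have lip : ∀ n, LipschitzOnWith L h (Metric.ball (e n) (r (e n))) := by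
    intro n
    have hball : Metric.ball (e n) (r (e n)) ⊆ V := hrV _ (hes n)
    apply (convex_ball _ _).lipschitzOnWith_of_nnnorm_hasFDerivWithin_le
      (f' := fun y => fderiv ℝ h y)
    · intro y hy
      exact (hdiff y (hball hy).1).hasFDerivAt.hasFDerivWithinAt
    · intro y hy
      have : ‖fderiv ℝ h y‖ < (L : ℝ) := (hball hy).2
      exact le_of_lt (by exact_mod_cast this)
  set D : ℕ → Set (EuclideanSpace ℝ (Fin k)) :=
    disjointed (fun n => Metric.ball (e n) (r (e n))) with hD
  have hDmeas : ∀ n, MeasurableSet (D n) :=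
    MeasurableSet.disjointed fun n => measurableSet_ball
  have hDsub : ∀ n, D n ⊆ Metric.ball (e n) (r (e n)) := fun n => disjointed_subset _ n
  set c : ℕ → Set (EuclideanSpace ℝ (Fin k)) := fun n => s ∩ D n with hc
  have hcmeas : ∀ n, MeasurableSet (c n) := fun n => hs.inter (hDmeas n)
  have hcdisj : Pairwise (Function.onFun Disjoint c) := fun i j hij =>
    ((disjoint_disjointed _) hij).mono inter_subset_right inter_subset_right
  have hsc : s = ⋃ n, c n := by
    apply Subset.antisymm
    · intro x hx
      have : x ∈ ⋃ n, Metric.ball (e n) (r (e n)) := by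
        have := hcover hx
        simpa [iUnion_subtype] using this
      rw [← iUnion_disjointed] at this
      obtain ⟨n, hn⟩ := mem_iUnion.1 this
      exact mem_iUnion.2 ⟨n, hx, hn⟩
    · exact iUnion_subset fun n => inter_subset_left
  calc μH[a] (h '' s) = μH[a] (⋃ n, h '' c n) := by rw [hsc, image_iUnion]
    _ ≤ ∑' n, μH[a] (h '' c n) := measure_iUnion_le _
    _ ≤ ∑' n, (L : ℝ≥0∞) ^ a * μH[a] (c n) := by
        refine ENNReal.tsum_le_tsum fun n => ?_
        exact ((lip n).mono (inter_subset_right.trans (hDsub n))).hausdorffMeasure_image_le ha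
    _ = (L : ℝ≥0∞) ^ a * ∑' n, μH[a] (c n) := ENNReal.tsum_mul_left
    _ = (L : ℝ≥0∞) ^ a * μH[a] s := by
        rw [← measure_iUnion hcdisj hcmeas, ← hsc]

/-- Step A: for every `ε > 0`,
`μH[a] (h '' s) ≤ ∫⁻ x in s, ENNReal.ofReal ((‖fderiv ℝ h x‖ + ε) ^ a)`. -/
lemma stepA {k m : ℕ} {U : Set (EuclideanSpace ℝ (Fin k))} (hU : IsOpen U)
    {h : EuclideanSpace ℝ (Fin k) → EuclideanSpace ℝ (Fin m)}
    (hh : ContDiffOn ℝ 1 h U) {a : ℝ} (ha : 0 ≤ a)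
    {s : Set (EuclideanSpace ℝ (Fin k))} (hsU : s ⊆ U) (hs : MeasurableSet s)
    {ε : ℝ} (hε : 0 < ε) :
    μH[a] (h '' s) ≤ ∫⁻ x in s, ENNReal.ofReal ((‖fderiv ℝ h x‖ + ε) ^ a) ∂μH[a] := by
  classical
  set g : EuclideanSpace ℝ (Fin k) → ℝ := fun x => ‖fderiv ℝ h x‖ with hgdef
  have hg : Measurable g := (measurable_fderiv ℝ h).norm
  have hg0 : ∀ x, 0 ≤ g x := fun x => norm_nonneg _
  set F : EuclideanSpace ℝ (Fin k) → ℕ := fun x => ⌊g x / ε⌋₊ with hFdef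
  have hF : Measurable F := (hg.div_const ε).nat_floor
  set c : ℕ → Set (EuclideanSpace ℝ (Fin k)) := fun n => s ∩ F ⁻¹' {n} with hc
  have hcmeas : ∀ n, MeasurableSet (c n) := fun n => hs.inter (hF (measurableSet_singleton n))
  have hcdisj : Pairwise (Function.onFun Disjoint c) := by
    intro i j hij
    rw [Function.onFun, Set.disjoint_left]
    rintro x ⟨-, hxi⟩ ⟨-, hxj⟩
    exact hij ((mem_singleton_iff.1 hxi).symm.trans (mem_singleton_iff.1 hxj))
  have hsc : s = ⋃ n, c n := by
    apply Subset.antisymm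
    · intro x hx; exact mem_iUnion.2 ⟨F x, hx, rfl⟩
    · exact iUnion_subset fun n => inter_subset_left
  -- bounds on each piece
  have hlow : ∀ n, ∀ x ∈ c n, (n : ℝ) * ε ≤ g x := by
    rintro n x ⟨-, hxn⟩
    have hn : (n : ℝ) ≤ g x / ε := by
      rw [← mem_singleton_iff.1 hxn]
      exact Nat.floor_le (div_nonneg (hg0 x) hε.le)
    calc (n : ℝ) * ε ≤ g x / ε * ε := by nlinarith
      _ = g x := div_mul_cancel₀ _ hε.ne'
  have hhigh : ∀ n, ∀ x ∈ c n, g x < ((n : ℝ) + 1) * ε := by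
    rintro n x ⟨-, hxn⟩
    have hn : g x / ε < (n : ℝ) + 1 := by
      rw [← mem_singleton_iff.1 hxn]
      exact Nat.lt_floor_add_one _
    calc g x = g x / ε * ε := (div_mul_cancel₀ _ hε.ne').symm
      _ < ((n : ℝ) + 1) * ε := by nlinarith
  set L : ℕ → ℝ≥0 := fun n => (((n : ℝ) + 1) * ε).toNNReal with hLdef
  have hLpos : ∀ n : ℕ, (0 : ℝ) ≤ ((n : ℝ) + 1) * ε := fun n => mul_nonneg (Nat.cast_add_one_pos n).le hε.le
  have key : ∀ n, μH[a] (h '' c n) ≤ (L n : ℝ≥0∞) ^ a * μH[a] (c n) := by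
    intro n
    refine key_lip hU hh ha (fun x hx => hsU hx.1) (hcmeas n) ?_
    intro x hx
    have : ‖fderiv ℝ h x‖ < ((n : ℝ) + 1) * ε := hhigh n x hx
    have h2 : (‖fderiv ℝ h x‖₊ : ℝ) < ((L n : ℝ≥0) : ℝ) := by
      rw [hLdef]; simpa [Real.coe_toNNReal _ (hLpos n)] using this
    exact_mod_cast h2
  have key2 : ∀ n, (L n : ℝ≥0∞) ^ a * μH[a] (c n)
      ≤ ∫⁻ x in c n, ENNReal.ofReal ((g x + ε) ^ a) ∂μH[a] := by
    intro n
    have hLeq : (L n : ℝ≥0∞) ^ a = ENNReal.ofReal ((((n : ℝ) + 1) * ε) ^ a) := by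
      rw [← ENNReal.ofReal_rpow_of_nonneg (hLpos n) ha]
      congr 1
    rw [hLeq]
    calc ENNReal.ofReal ((((n : ℝ) + 1) * ε) ^ a) * μH[a] (c n)
        = ∫⁻ _ in c n, ENNReal.ofReal ((((n : ℝ) + 1) * ε) ^ a) ∂μH[a] := by
          rw [setLIntegral_const]
      _ ≤ ∫⁻ x in c n, ENNReal.ofReal ((g x + ε) ^ a) ∂μH[a] := by
          refine setLIntegral_mono
            (Measurable.ennreal_ofReal ((hg.add_const ε).pow measurable_const)) ?_
          intro x hx
          refine ENNReal.ofReal_le_ofReal (Real.rpow_le_rpow (hLpos n) ?_ ha)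
          have := hlow n x hx
          linarith
  calc μH[a] (h '' s) = μH[a] (⋃ n, h '' c n) := by rw [hsc, image_iUnion]
    _ ≤ ∑' n, μH[a] (h '' c n) := measure_iUnion_le _
    _ ≤ ∑' n, ∫⁻ x in c n, ENNReal.ofReal ((g x + ε) ^ a) ∂μH[a] :=
        ENNReal.tsum_le_tsum fun n => (key n).trans (key2 n)
    _ = ∫⁻ x in ⋃ n, c n, ENNReal.ofReal ((g x + ε) ^ a) ∂μH[a] :=
        (lintegral_iUnion hcmeas hcdisj _).symm
    _ = ∫⁻ x in s, ENNReal.ofReal ((g x + ε) ^ a) ∂μH[a] := by rw [← hsc]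

/-- for `U ⊂ ℝ^k` open, `h : U → ℝ^m` continuously differentiable,
`λ(x) = ‖Dh(x)‖` the square root of the largest eigenvalue of `Dh(x)ᵀDh(x)`
(i.e. the operator norm of the derivative), `a ≥ 0`, and `A ⊆ U` Borel with
`ℋ^a(A) < ∞`:  `ℋ^a(h(A)) ≤ ∫_A λ(x)^a dℋ^a(x)`. -/
theorem stmt_11 {k m : ℕ} (U : Set (EuclideanSpace ℝ (Fin k))) (hU : IsOpen U)
    (h : EuclideanSpace ℝ (Fin k) → EuclideanSpace ℝ (Fin m))
    (hh : ContDiffOn ℝ 1 h U)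
    (a : ℝ) (ha : 0 ≤ a) (A : Set (EuclideanSpace ℝ (Fin k)))
    (hAU : A ⊆ U) (hA : MeasurableSet A) (hAfin : μH[a] A < ⊤) :
    μH[a] (h '' A) ≤ ∫⁻ x in A, ENNReal.ofReal (‖fderiv ℝ h x‖ ^ a) ∂μH[a] := by
  classical
  set g : EuclideanSpace ℝ (Fin k) → ℝ := fun x => ‖fderiv ℝ h x‖ with hgdef
  have hg : Measurable g := (measurable_fderiv ℝ h).norm
  have hg0 : ∀ x, 0 ≤ g x := fun x => norm_nonneg _
  rcases eq_or_lt_of_le ha with rfl | hapos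
  · -- a = 0
    have := stepA hU hh le_rfl hAU hA one_pos
    simpa [Real.rpow_zero] using this
  -- a > 0 from here on
  set B : ℕ → Set (EuclideanSpace ℝ (Fin k)) := fun N => A ∩ g ⁻¹' Iio (N : ℝ) with hB
  have hBmeas : ∀ N, MeasurableSet (B N) := fun N => hA.inter (hg measurableSet_Iio)
  have hBU : ∀ N, B N ⊆ U := fun N => inter_subset_left.trans hAU
  have hBmono : Monotone B := fun i j hij =>
    inter_subset_inter_right _ (preimage_mono (Iio_subset_Iio (by exact_mod_cast hij)))
  have hAB : A = ⋃ N, B N := by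
    apply Subset.antisymm
    · intro x hx
      obtain ⟨N, hN⟩ := exists_nat_gt (g x)
      exact mem_iUnion.2 ⟨N, hx, hN⟩
    · exact iUnion_subset fun N => inter_subset_left
  have himg : μH[a] (h '' A) = ⨆ N, μH[a] (h '' B N) := by
    rw [hAB, image_iUnion]
    exact Monotone.measure_iUnion fun i j hij => image_mono (hBmono hij)
  rw [himg]
  refine iSup_le fun N => ?_
  -- for each N
  set f : ℕ → EuclideanSpace ℝ (Fin k) → ℝ≥0∞ :=
    fun j x => ENNReal.ofReal ((g x + 1 / ((j : ℝ) + 1)) ^ a) with hf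
  have hfm : ∀ j, Measurable (f j) := fun j =>
    Measurable.ennreal_ofReal ((hg.add_const _).pow measurable_const)
  have hfanti : Antitone f := by
    intro i j hij x
    refine ENNReal.ofReal_le_ofReal (Real.rpow_le_rpow (by positivity) ?_ ha)
    have : 1 / ((j : ℝ) + 1) ≤ 1 / ((i : ℝ) + 1) := by
      apply one_div_le_one_div_of_le (by positivity)
      exact_mod_cast Nat.add_le_add_right hij 1
    linarith
  have hstep : ∀ j, μH[a] (h '' B N) ≤ ∫⁻ x in B N, f j x ∂μH[a] := fun j =>
    stepA hU hh ha (hBU N) (hBmeas N) (by positivity)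
  have hBfin : μH[a] (B N) < ⊤ := lt_of_le_of_lt (measure_mono inter_subset_left) hAfin
  have hfin : ∫⁻ x in B N, f 0 x ∂μH[a] ≠ ⊤ := by
    have hb : ∫⁻ x in B N, f 0 x ∂μH[a]
        ≤ ∫⁻ _ in B N, ENNReal.ofReal (((N : ℝ) + 1) ^ a) ∂μH[a] := by
      refine setLIntegral_mono measurable_const ?_
      intro x hx
      refine ENNReal.ofReal_le_ofReal (Real.rpow_le_rpow (by positivity) ?_ ha)
      have : g x < (N : ℝ) := hx.2
      norm_num
      linarith
    refine ne_of_lt (lt_of_le_of_lt hb ?_)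
    rw [setLIntegral_const]
    exact ENNReal.mul_lt_top ENNReal.ofReal_lt_top hBfin
  have hiInf : ∀ x, ⨅ j, f j x = ENNReal.ofReal (g x ^ a) := by
    intro x
    have htend : Filter.Tendsto (fun j : ℕ => g x + 1 / ((j : ℝ) + 1))
        Filter.atTop (nhds (g x)) := by
      have := tendsto_one_div_add_atTop_nhds_zero_nat (𝕜 := ℝ)
      simpa using Filter.Tendsto.add (tendsto_const_nhds (x := g x)) this
    have hrpow : Filter.Tendsto (fun j : ℕ => (g x + 1 / ((j : ℝ) + 1)) ^ a)
        Filter.atTop (nhds (g x ^ a)) := by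
      have hc : ContinuousAt (fun t : ℝ => t ^ a) (g x) :=
        Real.continuousAt_rpow_const _ _ (Or.inr ha)
      exact hc.tendsto.comp htend
    have hofReal : Filter.Tendsto (fun j : ℕ => f j x)
        Filter.atTop (nhds (ENNReal.ofReal (g x ^ a))) :=
      (ENNReal.continuous_ofReal.tendsto _).comp hrpow
    have hanti : Antitone fun j : ℕ => f j x := fun i j hij => hfanti hij x
    exact tendsto_nhds_unique (tendsto_atTop_iInf hanti) hofReal
  calc μH[a] (h '' B N) ≤ ⨅ j, ∫⁻ x in B N, f j x ∂μH[a] := le_iInf hstep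
    _ = ∫⁻ x in B N, ⨅ j, f j x ∂μH[a] := (lintegral_iInf hfm hfanti hfin).symm
    _ = ∫⁻ x in B N, ENNReal.ofReal (g x ^ a) ∂μH[a] := by simp_rw [hiInf]
    _ ≤ ∫⁻ x in A, ENNReal.ofReal (g x ^ a) ∂μH[a] :=
        lintegral_mono' (Measure.restrict_mono inter_subset_left le_rfl) le_rfl
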